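/- Under the same hypotheses on s, f₁, f₂, the function p₊(x,y) = (√x+√y)(1−√x−s(x))(1−√y−s(y)) / [2(1−x)(1−y)(1+f₂(x,y))] for xy > 0, extended by p₊(x,0) = √x(1−√x−s(x))/(2(1−x)), p₊(0,y) = √y(1−√y−s(y))/(2(1−y)), and p₊(0,0) = 0, is well defined, jointly continuous on [0,1/16]², and takes values in [0,1/2]. -/

import Mathlib

open Real Set

open Filter Topology

set_option maxHeartbeats 1000000 in
theorem stmt_7 (s s' : ℝ → ℝ)
    (hderiv : ∀ x ∈ Set.Ioc (0:ℝ) (1/16), HasDerivAt s (s' x) x)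
    (hcont : ContinuousOn s' (Set.Ioc (0:ℝ) (1/16)))
    (hs : ∀ x ∈ Set.Ioc (0:ℝ) (1/16), |s x| ≤ 1/16)
    (hs' : ∀ x ∈ Set.Ioc (0:ℝ) (1/16), |x * s' x| ≤ 1/16)
    (f₁ f₂ : ℝ → ℝ → ℝ)
    (hf₁ : ∀ x ∈ Set.Ioc (0:ℝ) (1/16), ∀ y ∈ Set.Ioc (0:ℝ) (1/16), x ≠ y →
      f₁ x y = (Real.sqrt x * s x - Real.sqrt y * s y) / (Real.sqrt x - Real.sqrt y))
    (hf₁diag : ∀ x ∈ Set.Ioc (0:ℝ) (1/16), f₁ x x = 2 * x * s' x + s x)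
    (hf₂ : ∀ x ∈ Set.Ioc (0:ℝ) (1/16), ∀ y ∈ Set.Ioc (0:ℝ) (1/16), x ≠ y →
      f₂ x y = (Real.sqrt y * s x - Real.sqrt x * s y) / (Real.sqrt x - Real.sqrt y))
    (hf₂diag : ∀ x ∈ Set.Ioc (0:ℝ) (1/16), f₂ x x = 2 * x * s' x - s x)
    (pplus : ℝ → ℝ → ℝ)
    (hp : ∀ x ∈ Set.Icc (0:ℝ) (1/16), ∀ y ∈ Set.Icc (0:ℝ) (1/16), 0 < x * y →
      pplus x y = (Real.sqrt x + Real.sqrt y) * (1 - Real.sqrt x - s x) * (1 - Real.sqrt y - s y) /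
        (2 * (1 - x) * (1 - y) * (1 + f₂ x y)))
    (hpx0 : ∀ x ∈ Set.Icc (0:ℝ) (1/16), 0 < x →
      pplus x 0 = Real.sqrt x * (1 - Real.sqrt x - s x) / (2 * (1 - x)))
    (hp0y : ∀ y ∈ Set.Icc (0:ℝ) (1/16), 0 < y →
      pplus 0 y = Real.sqrt y * (1 - Real.sqrt y - s y) / (2 * (1 - y)))
    (hp00 : pplus 0 0 = 0) :
    (∀ x ∈ Set.Icc (0:ℝ) (1/16), ∀ y ∈ Set.Icc (0:ℝ) (1/16), 0 < x * y →
        2 * (1 - x) * (1 - y) * (1 + f₂ x y) ≠ 0) ∧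
    ContinuousOn (fun p : ℝ × ℝ => pplus p.1 p.2)
      (Set.Icc (0:ℝ) (1/16) ×ˢ Set.Icc (0:ℝ) (1/16)) ∧
    (∀ x ∈ Set.Icc (0:ℝ) (1/16), ∀ y ∈ Set.Icc (0:ℝ) (1/16),
        pplus x y ∈ Set.Icc (0:ℝ) (1/2)) := by
  classical
  -- basic bounds
  have hsq14 : ∀ {x : ℝ}, x ≤ 1/16 → Real.sqrt x ≤ 1/4 := by
    intro x hx
    calc Real.sqrt x ≤ Real.sqrt (1/16) := Real.sqrt_le_sqrt hx
      _ = 1/4 := by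
          rw [show (1/16 : ℝ) = (1/4)^2 by norm_num]
          exact Real.sqrt_sq (by norm_num)
  have hgb : ∀ t ∈ Ioc (0:ℝ) (1/16),
      11/16 ≤ 1 - Real.sqrt t - s t ∧ 1 - Real.sqrt t - s t ≤ 17/16 := by
    intro t ht
    obtain ⟨h1, h2⟩ := abs_le.mp (hs t ht)
    have h3 := Real.sqrt_nonneg t
    have h4 := hsq14 ht.2
    exact ⟨by linarith, by linarith⟩
  have hgpos : ∀ t ∈ Ioc (0:ℝ) (1/16), (0:ℝ) < 1 - Real.sqrt t - s t := by
    intro t ht; linarith [(hgb t ht).1]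
  have hsqne : ∀ {x y : ℝ}, 0 ≤ x → 0 ≤ y → x ≠ y → Real.sqrt x ≠ Real.sqrt y := by
    intro x y hx hy hne hc
    exact hne (by rw [← Real.sq_sqrt hx, ← Real.sq_sqrt hy, hc])
  -- MVT bound for the f₂ numerator
  have hnum : ∀ x ∈ Ioc (0:ℝ) (1/16), ∀ y ∈ Ioc (0:ℝ) (1/16), y < x →
      |Real.sqrt y * s x - Real.sqrt x * s y| ≤ 3/16 * (Real.sqrt x - Real.sqrt y) := by
    intro x hx y hy hyx
    have hu : Real.sqrt y < Real.sqrt x := Real.sqrt_lt_sqrt hy.1.le hyx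
    have hv0 : 0 < Real.sqrt y := Real.sqrt_pos.mpr hy.1
    have hmem : ∀ t : ℝ, Real.sqrt y ≤ t → t ≤ Real.sqrt x → t^2 ∈ Ioc (0:ℝ) (1/16) := by
      intro t h1 h2
      have ht0 : 0 < t := lt_of_lt_of_le hv0 h1
      have ht4 : t ≤ 1/4 := le_trans h2 (hsq14 hx.2)
      constructor
      · positivity
      · nlinarith
    have hds : ∀ t, Real.sqrt y ≤ t → t ≤ Real.sqrt x →
        HasDerivAt (fun u => s (u^2)) (s' (t^2) * (2*t)) t := by
      intro t h1 h2
      have hpow : HasDerivAt (fun u : ℝ => u^2) (2*t) t := by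
        simpa using hasDerivAt_pow 2 t
      have := HasDerivAt.comp (h := fun u : ℝ => u^2) t (hderiv (t^2) (hmem t h1 h2)) hpow
      exact this
    obtain ⟨ξ, hξ, hslope⟩ := exists_hasDerivAt_eq_slope (fun u => s (u^2))
      (fun t => s' (t^2) * (2*t)) hu
      (fun t ht => (hds t ht.1 ht.2).continuousAt.continuousWithinAt)
      (fun t ht => hds t ht.1.le ht.2.le)
    rw [Real.sq_sqrt hx.1.le, Real.sq_sqrt hy.1.le] at hslope
    have hdne : Real.sqrt x - Real.sqrt y ≠ 0 := ne_of_gt (by linarith)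
    have hd : s x - s y = s' (ξ^2) * (2*ξ) * (Real.sqrt x - Real.sqrt y) := by
      rw [hslope]; field_simp
    have e1 : Real.sqrt y * s x - Real.sqrt x * s y
        = (Real.sqrt x - Real.sqrt y) * (Real.sqrt y * (s' (ξ^2) * (2*ξ)) - s y) := by
      linear_combination Real.sqrt y * hd
    have hξ0 : 0 < ξ := lt_trans hv0 hξ.1
    have hξm : ξ^2 ∈ Ioc (0:ℝ) (1/16) := hmem ξ hξ.1.le hξ.2.le
    have h5 := hs' (ξ^2) hξm
    have h6 := hs y hy
    have ha : |ξ^2 * s' (ξ^2)| = ξ^2 * |s' (ξ^2)| := by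
      rw [abs_mul, abs_of_pos (by positivity)]
    rw [ha] at h5
    have h7 : |Real.sqrt y * (s' (ξ^2) * (2*ξ))| ≤ 1/8 := by
      have e2 : |Real.sqrt y * (s' (ξ^2) * (2*ξ))|
          = Real.sqrt y * |s' (ξ^2)| * (2*ξ) := by
        rw [abs_mul, abs_mul, abs_of_pos hv0, abs_of_pos (by positivity : (0:ℝ) < 2*ξ)]
        ring
      rw [e2]
      nlinarith [abs_nonneg (s' (ξ^2)), hξ.1,
        mul_le_mul_of_nonneg_right hξ.1.le
          (mul_nonneg (abs_nonneg (s' (ξ^2))) (by positivity : (0:ℝ) ≤ 2*ξ))]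
    have h8 : |Real.sqrt y * (s' (ξ^2) * (2*ξ)) - s y| ≤ 3/16 := by
      obtain ⟨a1, a2⟩ := abs_le.mp h7
      obtain ⟨b1, b2⟩ := abs_le.mp h6
      rw [abs_le]; constructor <;> linarith
    rw [e1, abs_mul, abs_of_pos (by linarith : (0:ℝ) < Real.sqrt x - Real.sqrt y)]
    nlinarith [mul_le_mul_of_nonneg_left h8
      (by linarith : (0:ℝ) ≤ Real.sqrt x - Real.sqrt y)]
  -- |f₂| ≤ 3/16
  have hf2bnd : ∀ x ∈ Ioc (0:ℝ) (1/16), ∀ y ∈ Ioc (0:ℝ) (1/16), |f₂ x y| ≤ 3/16 := by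
    intro x hx y hy
    rcases eq_or_ne x y with rfl | hne
    · rw [hf₂diag x hx]
      obtain ⟨a1, a2⟩ := abs_le.mp (hs' x hx)
      obtain ⟨b1, b2⟩ := abs_le.mp (hs x hx)
      rw [abs_le]; constructor <;> nlinarith
    · rw [hf₂ x hx y hy hne, abs_div]
      have hdne : Real.sqrt x ≠ Real.sqrt y := hsqne hx.1.le hy.1.le hne
      have habs : 0 < |Real.sqrt x - Real.sqrt y| := abs_pos.mpr (sub_ne_zero.mpr hdne)
      rw [div_le_iff₀ habs]
      rcases hne.lt_or_gt with h | h
      · have h9 := hnum y hy x hx h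
        rw [abs_sub_comm] at h9
        calc |Real.sqrt y * s x - Real.sqrt x * s y|
            ≤ 3/16 * (Real.sqrt y - Real.sqrt x) := h9
          _ ≤ 3/16 * |Real.sqrt x - Real.sqrt y| := by
              rw [abs_sub_comm]
              nlinarith [le_abs_self (Real.sqrt y - Real.sqrt x)]
      · have := hnum x hx y hy h
        calc |Real.sqrt y * s x - Real.sqrt x * s y|
            ≤ 3/16 * (Real.sqrt x - Real.sqrt y) := this
          _ ≤ 3/16 * |Real.sqrt x - Real.sqrt y| := by
              nlinarith [le_abs_self (Real.sqrt x - Real.sqrt y)]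
  have hF13 : ∀ x ∈ Ioc (0:ℝ) (1/16), ∀ y ∈ Ioc (0:ℝ) (1/16),
      13/16 ≤ 1 + f₂ x y := by
    intro x hx y hy
    obtain ⟨a1, a2⟩ := abs_le.mp (hf2bnd x hx y hy)
    linarith
  have hFpos : ∀ x ∈ Ioc (0:ℝ) (1/16), ∀ y ∈ Ioc (0:ℝ) (1/16),
      (0:ℝ) < 1 + f₂ x y := by
    intro x hx y hy; linarith [hF13 x hx y hy]
  -- part 1: denominator nonzero
  have part1 : ∀ x ∈ Icc (0:ℝ) (1/16), ∀ y ∈ Icc (0:ℝ) (1/16), 0 < x * y →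
      2 * (1 - x) * (1 - y) * (1 + f₂ x y) ≠ 0 := by
    intro x hx y hy hxy
    have hx0 : 0 < x := by
      rcases eq_or_lt_of_le hx.1 with h | h
      · rw [← h] at hxy; simp at hxy
      · exact h
    have hy0 : 0 < y := by
      rcases eq_or_lt_of_le hy.1 with h | h
      · rw [← h] at hxy; simp at hxy
      · exact h
    have h1x : (0:ℝ) < 1 - x := by linarith [hx.2]
    have h1y : (0:ℝ) < 1 - y := by linarith [hy.2]
    have hF := hFpos x ⟨hx0, hx.2⟩ y ⟨hy0, hy.2⟩
    exact ne_of_gt (mul_pos (mul_pos (mul_pos two_pos h1x) h1y) hF)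
  -- bounds on pplus
  have hbnd : ∀ x ∈ Icc (0:ℝ) (1/16), ∀ y ∈ Icc (0:ℝ) (1/16),
      0 ≤ pplus x y ∧ pplus x y ≤ 4/5*(Real.sqrt x + Real.sqrt y) := by
    have axis : ∀ y ∈ Icc (0:ℝ) (1/16), 0 < y →
        0 ≤ Real.sqrt y * (1 - Real.sqrt y - s y) / (2 * (1 - y)) ∧
        Real.sqrt y * (1 - Real.sqrt y - s y) / (2 * (1 - y)) ≤ 4/5 * Real.sqrt y := by
      intro y hy hy0
      have hyI : y ∈ Ioc (0:ℝ) (1/16) := ⟨hy0, hy.2⟩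
      obtain ⟨hg1, hg2⟩ := hgb y hyI
      have h1y : (0:ℝ) < 1 - y := by linarith [hy.2]
      have hsy := Real.sqrt_nonneg y
      constructor
      · exact div_nonneg (mul_nonneg hsy (by linarith)) (by linarith)
      · rw [div_le_iff₀ (by linarith : (0:ℝ) < 2*(1-y))]
        nlinarith [mul_le_mul_of_nonneg_left hg2 hsy,
          mul_le_mul_of_nonneg_left (show (3/2:ℝ) ≤ 4/5*(2*(1-y)) by linarith [hy.2]) hsy]
    intro x hx y hy
    rcases eq_or_lt_of_le hx.1 with hx0 | hx0
    · rcases eq_or_lt_of_le hy.1 with hy0 | hy0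
      · rw [← hx0, ← hy0, hp00]
        norm_num [Real.sqrt_zero]
      · rw [← hx0, hp0y y hy hy0]
        obtain ⟨c1, c2⟩ := axis y hy hy0
        refine ⟨c1, ?_⟩
        rw [Real.sqrt_zero]
        calc Real.sqrt y * (1 - Real.sqrt y - s y) / (2 * (1 - y))
            ≤ 4/5 * Real.sqrt y := c2
          _ = 4/5*(0 + Real.sqrt y) := by ring
    · rcases eq_or_lt_of_le hy.1 with hy0 | hy0
      · rw [← hy0, hpx0 x hx hx0]
        obtain ⟨c1, c2⟩ := axis x hx hx0
        refine ⟨c1, ?_⟩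
        rw [Real.sqrt_zero]
        calc Real.sqrt x * (1 - Real.sqrt x - s x) / (2 * (1 - x))
            ≤ 4/5 * Real.sqrt x := c2
          _ = 4/5*(Real.sqrt x + 0) := by ring
      · -- both positive
        have hxI : x ∈ Ioc (0:ℝ) (1/16) := ⟨hx0, hx.2⟩
        have hyI : y ∈ Ioc (0:ℝ) (1/16) := ⟨hy0, hy.2⟩
        obtain ⟨gx1, gx2⟩ := hgb x hxI
        obtain ⟨gy1, gy2⟩ := hgb y hyI
        have hF := hF13 x hxI y hyI
        have hFp := hFpos x hxI y hyI
        have h1x : (0:ℝ) < 1 - x := by linarith [hx.2]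
        have h1y : (0:ℝ) < 1 - y := by linarith [hy.2]
        have hT0 : (0:ℝ) ≤ Real.sqrt x + Real.sqrt y :=
          add_nonneg (Real.sqrt_nonneg x) (Real.sqrt_nonneg y)
        have hD : (0:ℝ) < 2 * (1 - x) * (1 - y) * (1 + f₂ x y) :=
          mul_pos (mul_pos (mul_pos two_pos h1x) h1y) hFp
        rw [hp x hx y hy (mul_pos hx0 hy0)]
        constructor
        · exact div_nonneg (mul_nonneg (mul_nonneg hT0 (by linarith)) (by linarith)) hD.le
        · rw [div_le_iff₀ hD]
          have c1 : (1 - Real.sqrt x - s x) * (1 - Real.sqrt y - s y) ≤ 289/256 := by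
            nlinarith [mul_le_mul gx2 gy2 (by linarith) (by norm_num)]
          have c2a : (15/16:ℝ) ≤ 1 - x := by linarith [hx.2]
          have c2b : (15/16:ℝ) ≤ 1 - y := by linarith [hy.2]
          have c2 : (225/256 : ℝ) ≤ (1-x)*(1-y) := by
            nlinarith [mul_le_mul c2a c2b (by norm_num) (by linarith)]
          have c3 : (2925/4096 : ℝ) ≤ (1-x)*(1-y)*(1 + f₂ x y) := by
            nlinarith [mul_nonneg (sub_nonneg.mpr c2) (by linarith : (0:ℝ) ≤ 1 + f₂ x y)]
          calc (Real.sqrt x + Real.sqrt y) * (1 - Real.sqrt x - s x) * (1 - Real.sqrt y - s y)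
              = (Real.sqrt x + Real.sqrt y) * ((1 - Real.sqrt x - s x) * (1 - Real.sqrt y - s y)) := by
                ring
            _ ≤ (Real.sqrt x + Real.sqrt y) * (289/256) :=
                mul_le_mul_of_nonneg_left c1 hT0
            _ ≤ (Real.sqrt x + Real.sqrt y) * (8/5*((1-x)*(1-y)*(1 + f₂ x y))) :=
                mul_le_mul_of_nonneg_left (by linarith [c3]) hT0
            _ = 4/5*(Real.sqrt x + Real.sqrt y) * (2*(1-x)*(1-y)*(1 + f₂ x y)) := by ring
  -- part 3
  have part3 : ∀ x ∈ Icc (0:ℝ) (1/16), ∀ y ∈ Icc (0:ℝ) (1/16),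
      pplus x y ∈ Icc (0:ℝ) (1/2) := by
    intro x hx y hy
    obtain ⟨c1, c2⟩ := hbnd x hx y hy
    refine ⟨c1, ?_⟩
    have e1 := hsq14 hx.2
    have e2 := hsq14 hy.2
    linarith
  -- the auxiliary functions
  set q : ℝ → ℝ := fun t => Real.sqrt t / (1 - Real.sqrt t - s t) with hqdef
  set dq : ℝ → ℝ := fun t =>
      (1 - s t + 2*t*s' t) / (2*Real.sqrt t*(1 - Real.sqrt t - s t)^2) with hdqdef
  set Q : ℝ → ℝ → ℝ := fun x y =>
      if x = y then 2*Real.sqrt x*(1 - Real.sqrt x - s x)^2 / (1 + (2*x*s' x - s x))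
      else (x - y) / (q x - q y) with hQdef
  have hq0 : q 0 = 0 := by simp [hqdef]
  -- derivative of q
  have hqd : ∀ t ∈ Ioc (0:ℝ) (1/16), HasDerivAt q (dq t) t := by
    intro t ht
    have ht0 : (0:ℝ) < t := ht.1
    have hst : Real.sqrt t ≠ 0 := ne_of_gt (Real.sqrt_pos.mpr ht0)
    have hgt : 1 - Real.sqrt t - s t ≠ 0 := ne_of_gt (hgpos t ht)
    have h1 : HasDerivAt Real.sqrt (1/(2*Real.sqrt t)) t := Real.hasDerivAt_sqrt (ne_of_gt ht0)
    have h2 : HasDerivAt (fun u => 1 - Real.sqrt u - s u) (-(1/(2*Real.sqrt t)) - s' t) t := by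
      have := (h1.const_sub 1).sub (hderiv t ht)
      exact this
    have h3 := h1.div h2 hgt
    simp only [hqdef, hdqdef]
    refine h3.congr_deriv ?_
    have htt : Real.sqrt t * Real.sqrt t = t := Real.mul_self_sqrt ht0.le
    rw [← htt]
    field_simp
    ring_nf
    rw [Real.sq_sqrt ht0.le]
    simp only [Real.sq_sqrt ht0.le]
  have hscont : ContinuousOn s (Ioc (0:ℝ) (1/16)) :=
    fun t ht => (hderiv t ht).continuousAt.continuousWithinAt
  -- continuity of q on the closed interval
  have hqcont : ContinuousOn q (Icc (0:ℝ) (1/16)) := by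
    intro t ht
    rcases eq_or_lt_of_le ht.1 with h0 | h0
    · -- t = 0 : squeeze
      have hq0' : q 0 = 0 := hq0
      rw [← h0]
      show Tendsto q (𝓝[Icc (0:ℝ) (1/16)] 0) (𝓝 (q 0))
      rw [hq0']
      have hev1 : ∀ᶠ u in 𝓝[Icc (0:ℝ) (1/16)] 0, 0 ≤ q u := by
        filter_upwards [eventually_mem_nhdsWithin] with u hu
        rcases eq_or_lt_of_le hu.1 with h1 | h1
        · rw [← h1, hq0']
        · exact le_of_lt (by
            simp only [hqdef]
            exact div_pos (Real.sqrt_pos.mpr h1) (hgpos u ⟨h1, hu.2⟩))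
      have hev2 : ∀ᶠ u in 𝓝[Icc (0:ℝ) (1/16)] 0, q u ≤ 16/11 * Real.sqrt u := by
        filter_upwards [eventually_mem_nhdsWithin] with u hu
        rcases eq_or_lt_of_le hu.1 with h1 | h1
        · rw [← h1, hq0']; positivity
        · have hg1 := (hgb u ⟨h1, hu.2⟩).1
          simp only [hqdef]
          rw [div_le_iff₀ (hgpos u ⟨h1, hu.2⟩)]
          nlinarith [Real.sqrt_nonneg u,
            mul_le_mul_of_nonneg_left hg1 (Real.sqrt_nonneg u)]
      have hten : Tendsto (fun u : ℝ => 16/11 * Real.sqrt u)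
          (𝓝[Icc (0:ℝ) (1/16)] 0) (𝓝 0) := by
        have hc : Continuous (fun u : ℝ => 16/11 * Real.sqrt u) :=
          (continuous_const.mul Real.continuous_sqrt)
        have h2 := (hc.tendsto 0).mono_left
          (nhdsWithin_le_nhds (s := Icc (0:ℝ) (1/16)))
        simpa using h2
      exact squeeze_zero' hev1 hev2 hten
    · exact ((hqd t ⟨h0, ht.2⟩).continuousAt).continuousWithinAt
  -- dq is at least 1
  have hdq1 : ∀ t ∈ Ioc (0:ℝ) (1/16), 1 ≤ dq t := by
    intro t ht
    obtain ⟨hg1, hg2⟩ := hgb t ht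
    obtain ⟨hs1, hs2⟩ := abs_le.mp (hs t ht)
    obtain ⟨hp1, hp2⟩ := abs_le.mp (hs' t ht)
    have hsq := Real.sqrt_nonneg t
    have hsq4 := hsq14 ht.2
    have hsqpos : 0 < Real.sqrt t := Real.sqrt_pos.mpr ht.1
    have hgp : 0 < 1 - Real.sqrt t - s t := hgpos t ht
    have hDpos : 0 < 2*Real.sqrt t*(1 - Real.sqrt t - s t)^2 :=
      mul_pos (by positivity) (pow_pos hgp 2)
    simp only [hdqdef]
    rw [le_div_iff₀ hDpos, one_mul]
    have e1 : (1 - Real.sqrt t - s t)^2 ≤ (17/16)^2 := by nlinarith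
    nlinarith [mul_le_mul hsq4 e1 (by positivity) (by norm_num)]
  have hdqne : ∀ t ∈ Ioc (0:ℝ) (1/16), dq t ≠ 0 := by
    intro t ht; have := hdq1 t ht; intro h; rw [h] at this; linarith
  -- continuity of dq
  have hdqcont : ContinuousOn dq (Ioc (0:ℝ) (1/16)) := by
    simp only [hdqdef]
    apply ContinuousOn.div
    · exact (continuousOn_const.sub hscont).add
        ((continuousOn_const.mul continuousOn_id).mul hcont)
    · exact ((continuous_const.mul Real.continuous_sqrt).continuousOn).mul
        (((continuousOn_const.sub Real.continuous_sqrt.continuousOn).sub hscont).pow 2)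
    · intro t ht
      have h1 : 0 < Real.sqrt t := Real.sqrt_pos.mpr ht.1
      exact ne_of_gt (mul_pos (by positivity) (pow_pos (hgpos t ht) 2))
  -- mean value theorem for q
  have hmvt : ∀ x y : ℝ, 0 < x → x < y → y ≤ 1/16 →
      ∃ ξ, x < ξ ∧ ξ < y ∧ q y - q x = dq ξ * (y - x) := by
    intro x y hx0 hxy hy16
    obtain ⟨ξ, hξ, hslope⟩ := exists_hasDerivAt_eq_slope q dq hxy
      (fun t ht => ((hqd t ⟨lt_of_lt_of_le hx0 ht.1, le_trans ht.2 hy16⟩).continuousAt).continuousWithinAt)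
      (fun t ht => hqd t ⟨lt_trans hx0 ht.1, ht.2.le.trans hy16⟩)
    refine ⟨ξ, hξ.1, hξ.2, ?_⟩
    have hne : y - x ≠ 0 := ne_of_gt (by linarith)
    rw [hslope]
    field_simp
  -- q is strictly monotone
  have hqmono : ∀ x ∈ Icc (0:ℝ) (1/16), ∀ y ∈ Icc (0:ℝ) (1/16), x < y → q x < q y := by
    intro x hx y hy hxy
    rcases eq_or_lt_of_le hx.1 with h0 | h0
    · rw [← h0, hq0]
      simp only [hqdef]
      exact div_pos (Real.sqrt_pos.mpr (by linarith)) (hgpos y ⟨by linarith, hy.2⟩)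
    · obtain ⟨ξ, h1, h2, h3⟩ := hmvt x y h0 hxy hy.2
      have h4 := hdq1 ξ ⟨by linarith, by linarith [hy.2]⟩
      nlinarith
  -- symmetry of Q
  have hQsymm : ∀ x y : ℝ, Q x y = Q y x := by
    intro x y
    rcases eq_or_ne x y with rfl | hne
    · rfl
    · simp only [hQdef]
      rw [if_neg hne, if_neg (Ne.symm hne), ← neg_sub y x, ← neg_sub (q y) (q x),
        neg_div_neg_eq]
  -- diagonal values
  have hQxx : ∀ x ∈ Ioc (0:ℝ) (1/16), Q x x = 1 / dq x := by
    intro x hx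
    have e : Q x x = 2*Real.sqrt x*(1 - Real.sqrt x - s x)^2 / (1 + (2*x*s' x - s x)) := by
      simp [hQdef]
    rw [e]
    simp only [hdqdef]
    rw [one_div_div, show 1 + (2*x*s' x - s x) = 1 - s x + 2*x*s' x by ring]
  -- pplus in terms of Q
  have hQeq : ∀ x ∈ Icc (0:ℝ) (1/16), ∀ y ∈ Icc (0:ℝ) (1/16),
      pplus x y = Q x y / (2*(1-x)*(1-y)) := by
    intro x hx y hy
    rcases eq_or_lt_of_le hx.1 with hx0 | hx0
    · rcases eq_or_lt_of_le hy.1 with hy0 | hy0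
      · rw [← hx0, ← hy0, hp00]
        have : Q 0 0 = 0 := by simp [hQdef]
        rw [this]
        norm_num
      · -- x = 0 < y
        rw [← hx0, hp0y y hy hy0]
        have hyI : y ∈ Ioc (0:ℝ) (1/16) := ⟨hy0, hy.2⟩
        have hsy : Real.sqrt y ≠ 0 := ne_of_gt (Real.sqrt_pos.mpr hy0)
        have hgy : (1 - Real.sqrt y - s y) ≠ 0 := ne_of_gt (hgpos y hyI)
        have hne : (0:ℝ) ≠ y := ne_of_lt hy0
        have e : Q 0 y = Real.sqrt y * (1 - Real.sqrt y - s y) := by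
          simp only [hQdef]
          rw [if_neg hne, hq0]
          simp only [hqdef]
          rw [zero_sub, zero_sub, neg_div_neg_eq, div_div_eq_mul_div]
          rw [div_eq_iff hsy]
          have htt : Real.sqrt y * Real.sqrt y = y := Real.mul_self_sqrt hy0.le
          linear_combination (-(1 - Real.sqrt y - s y)) * htt
        rw [e]
        have h1y : (1:ℝ) - y ≠ 0 := by
          have := hy.2; intro hcon; rw [sub_eq_zero] at hcon; rw [← hcon] at this
          norm_num at this
        field_simp
        norm_num
    · rcases eq_or_lt_of_le hy.1 with hy0 | hy0
      · -- y = 0 < x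
        rw [← hy0, hpx0 x hx hx0]
        have hxI : x ∈ Ioc (0:ℝ) (1/16) := ⟨hx0, hx.2⟩
        have hsx : Real.sqrt x ≠ 0 := ne_of_gt (Real.sqrt_pos.mpr hx0)
        have hgx : (1 - Real.sqrt x - s x) ≠ 0 := ne_of_gt (hgpos x hxI)
        have hne : x ≠ (0:ℝ) := ne_of_gt hx0
        have e : Q x 0 = Real.sqrt x * (1 - Real.sqrt x - s x) := by
          simp only [hQdef]
          rw [if_neg hne, hq0]
          simp only [hqdef]
          rw [sub_zero, sub_zero, div_div_eq_mul_div]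
          rw [div_eq_iff hsx]
          have htt : Real.sqrt x * Real.sqrt x = x := Real.mul_self_sqrt hx0.le
          linear_combination (-(1 - Real.sqrt x - s x)) * htt
        rw [e]
        have h1x : (1:ℝ) - x ≠ 0 := by
          have := hx.2; intro hcon; rw [sub_eq_zero] at hcon; rw [← hcon] at this
          norm_num at this
        field_simp
        norm_num
      · -- both positive
        have hxI : x ∈ Ioc (0:ℝ) (1/16) := ⟨hx0, hx.2⟩
        have hyI : y ∈ Ioc (0:ℝ) (1/16) := ⟨hy0, hy.2⟩
        have hgx : (0:ℝ) < 1 - Real.sqrt x - s x := hgpos x hxI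
        have hgy : (0:ℝ) < 1 - Real.sqrt y - s y := hgpos y hyI
        have h1x : (0:ℝ) < 1 - x := by linarith [hx.2]
        have h1y : (0:ℝ) < 1 - y := by linarith [hy.2]
        rw [hp x hx y hy (mul_pos hx0 hy0)]
        rcases eq_or_ne x y with rfl | hne
        · rw [hf₂diag x hxI]
          have e : Q x x = 2*Real.sqrt x*(1 - Real.sqrt x - s x)^2 / (1 + (2*x*s' x - s x)) := by
            simp [hQdef]
          rw [e]
          rw [div_div]
          congr 1
          · ring
          · ring
        · have hFne : 1 + f₂ x y ≠ 0 := ne_of_gt (hFpos x hxI y hyI)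
          have hdne : Real.sqrt x - Real.sqrt y ≠ 0 :=
            sub_ne_zero.mpr (hsqne hx0.le hy0.le hne)
          have e0 : Real.sqrt x * (1 - Real.sqrt y - s y) - (1 - Real.sqrt x - s x) * Real.sqrt y
              = (Real.sqrt x - Real.sqrt y) * (1 + f₂ x y) := by
            rw [hf₂ x hxI y hyI hne]
            field_simp
            ring
          have e1 : q x - q y = (Real.sqrt x - Real.sqrt y) * (1 + f₂ x y) /
              ((1 - Real.sqrt x - s x) * (1 - Real.sqrt y - s y)) := by
            simp only [hqdef]
            rw [div_sub_div _ _ (ne_of_gt hgx) (ne_of_gt hgy), e0]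
          have e2 : Q x y = (x - y) / ((Real.sqrt x - Real.sqrt y) * (1 + f₂ x y) /
              ((1 - Real.sqrt x - s x) * (1 - Real.sqrt y - s y))) := by
            simp only [hQdef]
            rw [if_neg hne, e1]
          rw [e2]
          have hxy2 : x - y = (Real.sqrt x + Real.sqrt y) * (Real.sqrt x - Real.sqrt y) := by
            have t1 := Real.mul_self_sqrt hx0.le
            have t2 := Real.mul_self_sqrt hy0.le
            linear_combination t2 - t1
          rw [hxy2]
          rw [div_div_eq_mul_div, div_div]
          field_simp
  -- bounds for Q
  have hQbnd : ∀ x ∈ Icc (0:ℝ) (1/16), ∀ y ∈ Icc (0:ℝ) (1/16),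
      0 ≤ Q x y ∧ Q x y ≤ 2*(Real.sqrt x + Real.sqrt y) := by
    intro x hx y hy
    have h1x : (0:ℝ) < 1 - x := by linarith [hx.2]
    have h1y : (0:ℝ) < 1 - y := by linarith [hy.2]
    have hD : (0:ℝ) < 2*(1-x)*(1-y) := by positivity
    have hQval : Q x y = pplus x y * (2*(1-x)*(1-y)) := by
      rw [hQeq x hx y hy]
      field_simp
    obtain ⟨c0, c1⟩ := hbnd x hx y hy
    have hT0 : (0:ℝ) ≤ Real.sqrt x + Real.sqrt y :=
      add_nonneg (Real.sqrt_nonneg x) (Real.sqrt_nonneg y)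
    constructor
    · rw [hQval]; exact mul_nonneg c0 hD.le
    · rw [hQval]
      have hD2 : 2*(1-x)*(1-y) ≤ 2 := by nlinarith [mul_pos h1x h1y, hx.1, hy.1]
      calc pplus x y * (2*(1-x)*(1-y)) ≤ (4/5*(Real.sqrt x + Real.sqrt y)) * 2 := by
            apply mul_le_mul c1 hD2 hD.le (by positivity)
        _ ≤ 2*(Real.sqrt x + Real.sqrt y) := by linarith
  -- continuity of Q on the square
  have hQc : ContinuousOn (fun p : ℝ × ℝ => Q p.1 p.2)
      (Icc (0:ℝ) (1/16) ×ˢ Icc (0:ℝ) (1/16)) := by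
    rintro ⟨a, b⟩ hab
    have hA : a ∈ Icc (0:ℝ) (1/16) := hab.1
    have hB : b ∈ Icc (0:ℝ) (1/16) := hab.2
    rcases eq_or_ne a b with rfl | hne
    · -- diagonal
      rcases eq_or_lt_of_le hA.1 with ha0 | ha0
      · -- a = 0 : squeeze
        have hQ00 : Q 0 0 = 0 := by simp [hQdef]
        rw [← ha0]
        show Tendsto (fun p : ℝ × ℝ => Q p.1 p.2)
          (𝓝[Icc (0:ℝ) (1/16) ×ˢ Icc (0:ℝ) (1/16)] (0, 0))
          (𝓝 ((fun p : ℝ × ℝ => Q p.1 p.2) (0, 0)))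
        have : (fun p : ℝ × ℝ => Q p.1 p.2) (0, 0) = 0 := hQ00
        rw [this]
        have hev1 : ∀ᶠ p : ℝ × ℝ in 𝓝[Icc (0:ℝ) (1/16) ×ˢ Icc (0:ℝ) (1/16)] (0, 0),
            0 ≤ Q p.1 p.2 := by
          filter_upwards [eventually_mem_nhdsWithin] with p hp
          exact (hQbnd p.1 hp.1 p.2 hp.2).1
        have hev2 : ∀ᶠ p : ℝ × ℝ in 𝓝[Icc (0:ℝ) (1/16) ×ˢ Icc (0:ℝ) (1/16)] (0, 0),
            Q p.1 p.2 ≤ 2*(Real.sqrt p.1 + Real.sqrt p.2) := by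
          filter_upwards [eventually_mem_nhdsWithin] with p hp
          exact (hQbnd p.1 hp.1 p.2 hp.2).2
        have hten : Tendsto (fun p : ℝ × ℝ => 2*(Real.sqrt p.1 + Real.sqrt p.2))
            (𝓝[Icc (0:ℝ) (1/16) ×ˢ Icc (0:ℝ) (1/16)] (0, 0)) (𝓝 0) := by
          have hc : Continuous (fun p : ℝ × ℝ => 2*(Real.sqrt p.1 + Real.sqrt p.2)) :=
            continuous_const.mul ((Real.continuous_sqrt.comp continuous_fst).add
              (Real.continuous_sqrt.comp continuous_snd))
          have h2 := (hc.tendsto (0, 0)).mono_left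
            (nhdsWithin_le_nhds (s := Icc (0:ℝ) (1/16) ×ˢ Icc (0:ℝ) (1/16)))
          simpa using h2
        exact squeeze_zero' hev1 hev2 hten
      · -- a > 0 : eps-delta with the MVT
        have haI : a ∈ Ioc (0:ℝ) (1/16) := ⟨ha0, hA.2⟩
        have hQaa : Q a a = 1 / dq a := hQxx a haI
        rw [Metric.continuousWithinAt_iff]
        intro ε hε
        have hH := hdqcont a haI
        rw [Metric.continuousWithinAt_iff] at hH
        obtain ⟨δ₁, hδ₁, hH⟩ := hH ε hε
        refine ⟨min δ₁ a, by positivity, ?_⟩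
        rintro ⟨x, y⟩ hxy hd
        rw [Prod.dist_eq, max_lt_iff] at hd
        obtain ⟨hdx, hdy⟩ := hd
        simp only [Real.dist_eq] at hdx hdy
        have hma : min δ₁ a ≤ a := min_le_right _ _
        have hmd : min δ₁ a ≤ δ₁ := min_le_left _ _
        obtain ⟨ex1, ex2⟩ := abs_lt.mp hdx
        obtain ⟨ey1, ey2⟩ := abs_lt.mp hdy
        have hx16 : x ≤ 1/16 := hxy.1.2
        have hy16 : y ≤ 1/16 := hxy.2.2
        have hx0 : 0 < x := by linarith
        have hy0 : 0 < y := by linarith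
        have hkey : ∀ ξ, ξ ∈ Ioc (0:ℝ) (1/16) → |ξ - a| < δ₁ →
            dist (1/dq ξ) (1/dq a) < ε := by
          intro ξ hξ hξa
          have h1 := hdq1 ξ hξ
          have h2 := hdq1 a haI
          have h3 : dist (dq ξ) (dq a) < ε := hH hξ (by rwa [Real.dist_eq])
          rw [Real.dist_eq] at h3 ⊢
          have hne1 : dq ξ ≠ 0 := by intro hcon; rw [hcon] at h1; linarith
          have hne2 : dq a ≠ 0 := by intro hcon; rw [hcon] at h2; linarith
          have habs : |1/dq ξ - 1/dq a| ≤ |dq ξ - dq a| := by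
            rw [div_sub_div _ _ hne1 hne2, one_mul, mul_one, abs_div]
            have hp1 : |dq ξ * dq a| = dq ξ * dq a := abs_of_pos (by nlinarith)
            rw [hp1, abs_sub_comm]
            exact div_le_self (abs_nonneg _) (by nlinarith)
          linarith
        show dist (Q x y) (Q a a) < ε
        have main : ∀ u v : ℝ, 0 < u → v ≤ 1/16 → u < v → |u - a| < min δ₁ a →
            |v - a| < min δ₁ a → dist (Q u v) (Q a a) < ε := by
          intro u v hu0 hv16 huv hdu hdv
          obtain ⟨ξ, k1, k2, k3⟩ := hmvt u v hu0 huv hv16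
          obtain ⟨eu1, eu2⟩ := abs_lt.mp hdu
          obtain ⟨ev1, ev2⟩ := abs_lt.mp hdv
          have hξI : ξ ∈ Ioc (0:ℝ) (1/16) := ⟨by linarith, by linarith⟩
          have hdqξ : dq ξ ≠ 0 := hdqne ξ hξI
          have huvne : u ≠ v := ne_of_lt huv
          have hQuv : Q u v = 1/dq ξ := by
            have e1 : q u - q v = dq ξ * (u - v) := by linear_combination -k3
            simp only [hQdef]
            rw [if_neg huvne, e1]
            rw [div_eq_div_iff (by exact mul_ne_zero hdqξ (sub_ne_zero.mpr huvne)) hdqξ]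
            ring
          rw [hQuv, hQaa]
          exact hkey ξ hξI (abs_lt.mpr ⟨by linarith, by linarith⟩)
        rcases lt_trichotomy x y with h | h | h
        · exact main x y hx0 hy16 h (abs_lt.mpr ⟨ex1, ex2⟩) (abs_lt.mpr ⟨ey1, ey2⟩)
        · rw [h] at hdx ⊢
          rw [hQxx y ⟨hy0, hy16⟩, hQaa]
          exact hkey y ⟨hy0, hy16⟩ (by rw [abs_lt]; constructor <;> linarith)
        · rw [hQsymm]
          exact main y x hy0 hx16 h (abs_lt.mpr ⟨ey1, ey2⟩) (abs_lt.mpr ⟨ex1, ex2⟩)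
    · -- off-diagonal
      have hqane : q a - q b ≠ 0 := by
        rcases hne.lt_or_gt with h | h
        · exact ne_of_lt (sub_neg.mpr (hqmono a hA b hB h))
        · exact ne_of_gt (sub_pos.mpr (hqmono b hB a hA h))
      have hcq : ContinuousWithinAt (fun p : ℝ × ℝ => (p.1 - p.2)/(q p.1 - q p.2))
          (Icc (0:ℝ) (1/16) ×ˢ Icc (0:ℝ) (1/16)) (a, b) := by
        apply ContinuousWithinAt.div
        · exact (continuous_fst.continuousWithinAt).sub (continuous_snd.continuousWithinAt)
        · exact ((hqcont a hA).comp continuous_fst.continuousWithinAt (fun p (hp : p ∈ Icc (0:ℝ) (1/16) ×ˢ Icc (0:ℝ) (1/16)) => hp.1)).sub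
            ((hqcont b hB).comp (x := (a, b)) continuous_snd.continuousWithinAt (fun p (hp : p ∈ Icc (0:ℝ) (1/16) ×ˢ Icc (0:ℝ) (1/16)) => hp.2))
        · exact hqane
      apply hcq.congr_of_eventuallyEq
      · have hmemn : {p : ℝ × ℝ | p.1 ≠ p.2} ∈
            𝓝[Icc (0:ℝ) (1/16) ×ˢ Icc (0:ℝ) (1/16)] (a, b) :=
          mem_nhdsWithin_of_mem_nhds
            ((isOpen_ne_fun continuous_fst continuous_snd).mem_nhds hne)
        filter_upwards [hmemn] with p hp
        simp only [hQdef]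
        rw [if_neg hp]
      · simp only [hQdef]
        rw [if_neg hne]
  -- assemble
  refine ⟨part1, ?_, part3⟩
  have hden : ContinuousOn (fun p : ℝ × ℝ => 2*(1-p.1)*(1-p.2))
      (Icc (0:ℝ) (1/16) ×ˢ Icc (0:ℝ) (1/16)) :=
    (((continuous_const.mul (continuous_const.sub continuous_fst)).mul
      (continuous_const.sub continuous_snd))).continuousOn
  have hdenne : ∀ p : ℝ × ℝ, p ∈ Icc (0:ℝ) (1/16) ×ˢ Icc (0:ℝ) (1/16) →
      2*(1-p.1)*(1-p.2) ≠ 0 := by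
    intro p hp
    have h1 : (0:ℝ) < 1 - p.1 := by linarith [hp.1.2]
    have h2 : (0:ℝ) < 1 - p.2 := by linarith [hp.2.2]
    positivity
  have hcont2 : ContinuousOn (fun p : ℝ × ℝ => Q p.1 p.2 / (2*(1-p.1)*(1-p.2)))
      (Icc (0:ℝ) (1/16) ×ˢ Icc (0:ℝ) (1/16)) :=
    hQc.div hden hdenne
  exact hcont2.congr (fun p hp => hQeq p.1 hp.1 p.2 hp.2)
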